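/- Let T be a clique tree of a finite simple graph G, rooted at a node C_r. Let D ⊆ V_G and let x ∈ D, and suppose that the node C(x) contains a vertex w ∈ D with w ≠ x. Then every private neighbor of x with respect to D lies in V(C(x)), i.e., P(D,x) ⊆ V(C(x)). -/

import Mathlib

variable {V : Type*}

/-- The closed neighborhood `N[x]` of a vertex. -/
def closedNbhd (G : SimpleGraph V) (x : V) : Set V := insert x (G.neighborSet x)

/-- `N[S] = ⋃ x ∈ S, N[x]`. -/
def closedNbhdSet (G : SimpleGraph V) (S : Set V) : Set V := ⋃ x ∈ S, closedNbhd G x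

/-- `D` is a dominating set: `N[D] = V`. -/
def IsDomSet (G : SimpleGraph V) (D : Set V) : Prop := closedNbhdSet G D = Set.univ

/-- Minimal dominating set: dominating, and no proper subset dominates. -/
def IsMinDomSet (G : SimpleGraph V) (D : Set V) : Prop :=
  IsDomSet G D ∧ ∀ D' : Set V, D' ⊂ D → ¬ IsDomSet G D'

/-- Private neighbors of `x` with respect to `D`: `P(D,x) = {y : N[y] ∩ D = {x}}`. -/
def privNbrs (G : SimpleGraph V) (D : Set V) (x : V) : Set V :=
  {y | closedNbhd G y ∩ D = {x}}

/-- Irredundant set: every member has a private neighbor. -/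
def IsIrredundant (G : SimpleGraph V) (D : Set V) : Prop :=
  ∀ x ∈ D, (privNbrs G D x).Nonempty

/-- Maximal clique. -/
def IsMaxClique (G : SimpleGraph V) (C : Set V) : Prop :=
  G.IsClique C ∧ ∀ D : Set V, G.IsClique D → C ⊆ D → C = D

/-- The type of maximal cliques of `G`. -/
abbrev MaxClique (G : SimpleGraph V) := {C : Set V // IsMaxClique G C}

/-- A clique tree of `G`, rooted at `root`: a rooted tree whose nodes are exactly the
maximal cliques of `G` (encoded by a parent function from which every node reaches the
root), such that for each vertex `x` the nodes containing `x` induce a connected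
subtree of the tree. -/
structure CliqueTree (G : SimpleGraph V) where
  parent : MaxClique G → MaxClique G
  root : MaxClique G
  parent_root : parent root = root
  reaches_root : ∀ C : MaxClique G, ∃ n : ℕ, parent^[n] C = root
  vertex_subtree : ∀ x : V,
    ((SimpleGraph.fromRel fun C C' : MaxClique G => parent C = C').induce
      {C : MaxClique G | x ∈ C.1}).Connected

variable {G : SimpleGraph V}

open Classical in
/-- `f(C) := C ∖ Pa(C)` for non-root `C`, and `f(C_r) := C_r`. -/
noncomputable def fC (T : CliqueTree G) (C : MaxClique G) : Set V :=
  if C = T.root then C.1 else C.1 \ (T.parent C).1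

/-- `IsAnc T A B` : `A` is an ancestor of `B` (i.e. `B ⪯ A`), namely `A` lies on the
path from the root to `B`. -/
def IsAnc (T : CliqueTree G) (A B : MaxClique G) : Prop :=
  ∃ n : ℕ, T.parent^[n] B = A

/-- `V(C) := ⋃_{C' ⪯ C} f(C')`. -/
noncomputable def Vsub (T : CliqueTree G) (C : MaxClique G) : Set V :=
  ⋃ C' ∈ {C' : MaxClique G | IsAnc T C C'}, fC T C'


/-- Key chain lemma: if `y ∈ C`, then some iterate of `parent` applied to `C` reaches
`Cx y`, and `y` belongs to every node along the way. -/
lemma chain_aux (T : CliqueTree G) (Cx : V → MaxClique G)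
    (hCx : ∀ (v : V) (C : MaxClique G), v ∈ fC T C ↔ C = Cx v) (y : V) :
    ∀ (n : ℕ) (C : MaxClique G), T.parent^[n] C = T.root → y ∈ C.1 →
      ∃ k, T.parent^[k] C = Cx y ∧ ∀ j ≤ k, y ∈ (T.parent^[j] C).1 := by
  intro n
  induction n with
  | zero =>
    intro C hn hy
    have hroot : C = T.root := hn
    have hfc : y ∈ fC T C := by
      unfold fC; rw [if_pos hroot]; exact hy
    exact ⟨0, (hCx y C).mp hfc, fun j hj => by
      simpa [Nat.le_zero.mp hj] using hy⟩
  | succ n ih =>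
    intro C hn hy
    by_cases hCy : C = Cx y
    · exact ⟨0, hCy, fun j hj => by simpa [Nat.le_zero.mp hj] using hy⟩
    · have hp : y ∈ (T.parent C).1 := by
        by_contra hnp
        apply hCy
        rw [← hCx y C]
        unfold fC
        split
        · exact hy
        · exact ⟨hy, hnp⟩
      have hn' : T.parent^[n] (T.parent C) = T.root := by
        rw [← Function.iterate_succ_apply]; exact hn
      obtain ⟨k, hk, hall⟩ := ih (T.parent C) hn' hp
      refine ⟨k + 1, ?_, ?_⟩
      · rw [Function.iterate_succ_apply]; exact hk
      · intro j hj
        match j with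
        | 0 => exact hy
        | j + 1 =>
          rw [Function.iterate_succ_apply]
          exact hall j (Nat.succ_le_succ_iff.mp hj)

/-- If `x ∈ D` and the node `C(x)` contains some `w ∈ D` with `w ≠ x`, then every
private neighbor of `x` w.r.t. `D` lies in `V(C(x))`. -/
theorem stmt6 {V : Type*} [Fintype V] (G : SimpleGraph V) (T : CliqueTree G)
    (Cx : V → MaxClique G) (hCx : ∀ (v : V) (C : MaxClique G), v ∈ fC T C ↔ C = Cx v)
    (D : Set V) (x : V) (hx : x ∈ D)
    (w : V) (hw : w ∈ D) (hwx : w ≠ x) (hwC : w ∈ (Cx x).1) :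
    privNbrs G D x ⊆ Vsub T (Cx x) := by
  intro y hy
  have hy' : closedNbhd G y ∩ D = {x} := hy
  have hxN : x ∈ closedNbhd G y ∧ x ∈ D := by
    have : x ∈ closedNbhd G y ∩ D := by rw [hy']; rfl
    exact this
  have hmemVsub : ∀ z : V, IsAnc T (Cx x) (Cx z) → z ∈ Vsub T (Cx x) := by
    intro z hanc
    refine Set.mem_biUnion hanc ?_
    exact (hCx z (Cx z)).mpr rfl
  rcases hxN.1 with hxy | hadj
  · -- x = y
    subst hxy
    exact hmemVsub x ⟨0, rfl⟩
  · -- G.Adj y x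
    have hadj' : G.Adj y x := hadj
    have hne : x ≠ y := (G.ne_of_adj hadj').symm
    -- find a maximal clique containing x and y
    have hclq : G.IsClique {x, y} := by
      exact SimpleGraph.isClique_pair.mpr (fun _ => hadj'.symm)
    obtain ⟨C0, ⟨hC0c, hC0x, hC0y⟩, hmax⟩ :=
      Set.Finite.exists_maximalFor (id : Set V → Set V)
        {C : Set V | G.IsClique C ∧ x ∈ C ∧ y ∈ C} (Set.toFinite _)
        ⟨{x, y}, hclq, by simp, by simp⟩
    have hC0max : IsMaxClique G C0 :=
      ⟨hC0c, fun D' hD' hsub => Set.Subset.antisymm hsub (hmax ⟨hD', hsub hC0x, hsub hC0y⟩ hsub)⟩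
    set C : MaxClique G := ⟨C0, hC0max⟩ with hCdef
    obtain ⟨N, hN⟩ := T.reaches_root C
    obtain ⟨m, hm, _⟩ := chain_aux T Cx hCx x N C hN hC0x
    obtain ⟨k, hk, hall⟩ := chain_aux T Cx hCx y N C hN hC0y
    rcases le_or_gt m k with hmk | hkm
    · -- y ∈ Cx x : contradiction via w
      exfalso
      have hyCx : y ∈ (Cx x).1 := by
        have := hall m hmk
        rwa [hm] at this
      have hwN : w ∈ closedNbhd G y := by
        by_cases hyw : y = w
        · exact hyw ▸ Set.mem_insert _ _
        · exact Set.mem_insert_of_mem _ ((Cx x).2.1 hyCx hwC hyw)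
      have : w ∈ closedNbhd G y ∩ D := ⟨hwN, hw⟩
      rw [hy'] at this
      exact hwx this
    · -- Cx x is an ancestor of Cx y
      refine hmemVsub y ⟨m - k, ?_⟩
      have : T.parent^[m - k + k] C = Cx x := by
        rw [Nat.sub_add_cancel hkm.le]; exact hm
      rw [Function.iterate_add_apply, hk] at this
      exact this
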